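/- Let N ≥ 3 be odd, φ ∈ ℝ^N, and let θ be any stationary point of F_φ (with θ_N = 0). Then |cos s_N|^{N−1} ≤ |det 𝓗(θ)| ≤ N · |cos s_N|^{N−1}. In particular, if cos s_N ≠ 0 then the stationary point is nondegenerate, i.e. det 𝓗(θ) ≠ 0. -/

import Mathlib

open Real Filter

/-- The variable `s k = φ k + θ (k+1) - θ k` (indices cyclic mod `N`,
0-based; paper index `k` corresponds to `k-1` here, so `s_N` is `sVar` at `lastIdx`). -/
noncomputable def sVar (N : ℕ) (hN : 0 < N) (φ θ : Fin N → ℝ) (k : Fin N) : ℝ :=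
  φ k + θ ⟨((k : ℕ) + 1) % N, Nat.mod_lt _ hN⟩ - θ k

/-- The lattice Landau gauge functional / random phase XY Hamiltonian
`F_φ(θ) = Σ_k (1 - cos(φ_k + θ_{k+1} - θ_k))` with periodic boundary conditions. -/
noncomputable def Fxy (N : ℕ) (hN : 0 < N) (φ θ : Fin N → ℝ) : ℝ :=
  ∑ k : Fin N, (1 - Real.cos (sVar N hN φ θ k))

/-- The index of the fixed site (paper site `N`). -/
def lastIdx (N : ℕ) (hN : 0 < N) : Fin N :=
  ⟨N - 1, Nat.sub_lt hN Nat.one_pos⟩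

/-- `θ` is a stationary point of `F_φ` regarded as a function of the free
coordinates `θ_1, …, θ_{N-1}` (0-based: coordinates `k` with `k < N-1`),
with `θ` at `lastIdx` held fixed: all partial derivatives vanish. -/
noncomputable def IsStationaryPt (N : ℕ) (hN : 0 < N) (φ θ : Fin N → ℝ) : Prop :=
  ∀ k : Fin N, (k : ℕ) < N - 1 →
    deriv (fun t : ℝ => Fxy N hN φ (Function.update θ k t)) (θ k) = 0

/-- The `(N-1) × (N-1)` tridiagonal matrix with entries
`δ_{ij}(c_{i-1} + c_i) - δ_{i-1,j} c_{i-1} - δ_{i+1,j} c_i`, where indices are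
0-based (paper index `i` ↦ `i-1`) and `c_0 := c_N` (cyclic predecessor). -/
noncomputable def hessC (N : ℕ) (hN : 0 < N) (c : Fin N → ℝ) :
    Matrix (Fin (N - 1)) (Fin (N - 1)) ℝ :=
  Matrix.of fun i j =>
    (if i = j then
        c ⟨((i : ℕ) + (N - 1)) % N, Nat.mod_lt _ hN⟩ +
          c ⟨(i : ℕ), lt_of_lt_of_le i.isLt (Nat.sub_le N 1)⟩
      else 0)
    - (if (i : ℕ) = (j : ℕ) + 1 then c ⟨((i : ℕ) + (N - 1)) % N, Nat.mod_lt _ hN⟩ else 0)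
    - (if (j : ℕ) = (i : ℕ) + 1 then c ⟨(i : ℕ), lt_of_lt_of_le i.isLt (Nat.sub_le N 1)⟩ else 0)

/-- The Hessian of `F_φ` (with the last coordinate fixed) at a configuration `θ`. -/
noncomputable def hessAt (N : ℕ) (hN : 0 < N) (φ θ : Fin N → ℝ) :
    Matrix (Fin (N - 1)) (Fin (N - 1)) ℝ :=
  hessC N hN fun k => Real.cos (sVar N hN φ θ k)

/-- `F_φ` as a function of the free coordinates only: the coordinate at
`lastIdx` is overwritten by `0`. -/
noncomputable def FxyFixed (N : ℕ) (hN : 0 < N) (φ : Fin N → ℝ) (η : Fin N → ℝ) : ℝ :=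
  Fxy N hN φ (Function.update η (lastIdx N hN) 0)

/-- The value `σ = (Φ + 2πl - π Σ_{k=1}^{N-1} q_k) / (1 + Σ_{k=1}^{N-1} (-1)^{q_k})`. -/
noncomputable def sigmaVal (N : ℕ) (hN : 0 < N) (φ : Fin N → ℝ) (q : Fin N → ℕ) (l : ℤ) : ℝ :=
  ((∑ k, φ k) + 2 * Real.pi * (l : ℝ)
      - Real.pi * ∑ k ∈ Finset.univ.erase (lastIdx N hN), (q k : ℝ)) /
    (1 + ∑ k ∈ Finset.univ.erase (lastIdx N hN), (-1 : ℝ) ^ (q k))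

noncomputable def triM (b : ℕ → ℝ) (n : ℕ) : Matrix (Fin n) (Fin n) ℝ :=
  Matrix.of fun i j =>
    if (i : ℕ) = (j : ℕ) then b i + b ((i : ℕ) + 1)
    else if (i : ℕ) = (j : ℕ) + 1 then -b i
    else if (j : ℕ) = (i : ℕ) + 1 then -b j
    else 0

lemma triM_apply (b : ℕ → ℝ) (n : ℕ) (i j : Fin n) : triM b n i j =
    if (i : ℕ) = (j : ℕ) then b i + b ((i : ℕ) + 1)
    else if (i : ℕ) = (j : ℕ) + 1 then -b i
    else if (j : ℕ) = (i : ℕ) + 1 then -b j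
    else 0 := rfl

lemma triM_sub (b : ℕ → ℝ) (n : ℕ) :
    (triM b (n + 1)).submatrix Fin.succ Fin.succ = triM (fun i => b (i + 1)) n := by
  ext i j
  simp only [Matrix.submatrix_apply, triM_apply, Fin.val_succ]
  split_ifs with h1 h2 h3 h4 h5 h6 h7 h8 h9 <;> first | rfl | omega

lemma succAbove_one_succ {n : ℕ} (j : Fin n) :
    (1 : Fin (n + 2)).succAbove j.succ = j.succ.succ := by
  rw [Fin.succAbove_of_le_castSucc]
  rw [Fin.le_castSucc_iff]
  simp [Fin.lt_def]

lemma triM_eq_zero {n : ℕ} (b : ℕ → ℝ) {i j : Fin n} (h1 : (i : ℕ) ≠ (j : ℕ))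
    (h2 : (i : ℕ) ≠ (j : ℕ) + 1) (h3 : (j : ℕ) ≠ (i : ℕ) + 1) : triM b n i j = 0 := by
  rw [triM_apply, if_neg h1, if_neg h2, if_neg h3]

lemma succAbove_one_zero {n : ℕ} : (1 : Fin (n + 2)).succAbove 0 = 0 := by
  rw [Fin.succAbove_of_castSucc_lt]
  · rfl
  · simp [Fin.lt_def]

lemma det_minor01 (b : ℕ → ℝ) (n : ℕ) :
    ((triM b (n + 2)).submatrix Fin.succ (1 : Fin (n + 2)).succAbove).det =
      -b 1 * (triM (fun i => b (i + 2)) n).det := by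
  rw [Matrix.det_succ_column_zero, Fin.sum_univ_succ]
  have h1 : ∀ i : Fin n,
      ((triM b (n + 2)).submatrix Fin.succ (1 : Fin (n + 2)).succAbove) i.succ 0 = 0 := by
    intro i
    rw [Matrix.submatrix_apply, succAbove_one_zero]
    refine triM_eq_zero b ?_ ?_ ?_ <;> simp only [Fin.val_succ, Fin.val_zero] <;> omega
  simp only [h1, mul_zero, zero_mul, Finset.sum_const_zero, add_zero]
  have h0 : ((triM b (n + 2)).submatrix Fin.succ (1 : Fin (n + 2)).succAbove) 0 0 = -b 1 := by
    rw [Matrix.submatrix_apply, succAbove_one_zero, triM_apply]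
    have hv : ((Fin.succ (0 : Fin (n + 1)) : Fin (n + 2)) : ℕ) = 1 := rfl
    have hz : ((0 : Fin (n + 2)) : ℕ) = 0 := rfl
    rw [hv, hz, if_neg (by omega), if_pos (by omega)]
  rw [h0]
  have h2 : (((triM b (n + 2)).submatrix Fin.succ (1 : Fin (n + 2)).succAbove).submatrix
      (Fin.succAbove 0) Fin.succ) = triM (fun i => b (i + 2)) n := by
    rw [Matrix.submatrix_submatrix]
    have : ((1 : Fin (n + 2)).succAbove ∘ Fin.succ : Fin n → Fin (n + 2)) =
        fun j => j.succ.succ := by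
      funext j; exact succAbove_one_succ j
    rw [this]
    have : (Fin.succ ∘ Fin.succAbove 0 : Fin n → Fin (n + 2)) = fun j => j.succ.succ := by
      funext j; simp [Fin.succAbove_zero]
    rw [this]
    have := triM_sub (fun i => b (i + 1)) n
    rw [← triM_sub b (n + 1)] at this
    rw [← this]
    ext i j
    simp [Matrix.submatrix_apply]
  rw [h2]
  simp

lemma det_triM_rec (b : ℕ → ℝ) (n : ℕ) :
    (triM b (n + 2)).det =
      (b 0 + b 1) * (triM (fun i => b (i + 1)) (n + 1)).det
        - b 1 ^ 2 * (triM (fun i => b (i + 2)) n).det := by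
  rw [Matrix.det_succ_row_zero, Fin.sum_univ_succ, Fin.sum_univ_succ]
  have hrest : ∀ j : Fin n, (triM b (n+2)) 0 j.succ.succ = 0 := by
    intro j
    simp [triM_apply]
  simp only [hrest, mul_zero, zero_mul, Finset.sum_const_zero, add_zero]
  have e1 : triM b (n + 2) 0 0 = b 0 + b 1 := by
    rw [triM_apply, if_pos rfl]
    norm_num
  have e2 : triM b (n + 2) 0 (Fin.succ 0) = -b 1 := by
    rw [triM_apply]
    have hv : ((Fin.succ (0 : Fin (n + 1)) : Fin (n + 2)) : ℕ) = 1 := rfl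
    have hz : ((0 : Fin (n + 2)) : ℕ) = 0 := rfl
    rw [hv, hz, if_neg (by omega), if_neg (by omega), if_pos (by omega)]
  rw [e1, e2, Fin.succAbove_zero, triM_sub, Fin.succ_zero_eq_one, det_minor01]
  norm_num
  ring

noncomputable def Sf : ℕ → (ℕ → ℝ) → ℝ
  | 0, _ => 1
  | (n + 1), b => (∏ j ∈ Finset.range (n + 1), b (j + 1)) + b 0 * Sf n (fun i => b (i + 1))

lemma Sf_rec2 (b : ℕ → ℝ) (n : ℕ) :
    Sf (n + 2) b = (b 0 + b 1) * Sf (n + 1) (fun i => b (i + 1))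
      - b 1 ^ 2 * Sf n (fun i => b (i + 2)) := by
  show (∏ j ∈ Finset.range (n + 2), b (j + 1)) + b 0 * Sf (n + 1) (fun i => b (i + 1)) = _
  have h1 : Sf (n + 1) (fun i => b (i + 1))
      = (∏ j ∈ Finset.range (n + 1), b (j + 2)) + b 1 * Sf n (fun i => b (i + 2)) := rfl
  have h2 : (∏ j ∈ Finset.range (n + 2), b (j + 1))
      = (∏ j ∈ Finset.range (n + 1), b (j + 2)) * b 1 := by
    rw [Finset.prod_range_succ' (fun j => b (j + 1)) (n + 1)]
  rw [h2, h1]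
  ring

lemma det_triM (n : ℕ) (b : ℕ → ℝ) : (triM b n).det = Sf n b := by
  induction n using Nat.strong_induction_on generalizing b with
  | _ n ih =>
    match n with
    | 0 => simp [Sf, Matrix.det_fin_zero]
    | 1 =>
      rw [Matrix.det_fin_one]
      show triM b 1 0 0 = _
      rw [triM_apply, if_pos rfl]
      show b 0 + b 1 = (∏ j ∈ Finset.range 1, b (j + 1)) + b 0 * Sf 0 (fun i => b (i + 1))
      simp [Sf]
      ring
    | (n + 2) =>
      rw [det_triM_rec, Sf_rec2, ih (n + 1) (by omega), ih n (by omega)]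

lemma Sf_sign (C : ℝ) : ∀ (n : ℕ) (e : ℕ → ℝ), (∀ j, e j = 1 ∨ e j = -1) →
    Sf n (fun j => e j * C) =
      C ^ n * (∏ j ∈ Finset.range (n + 1), e j) * (∑ k ∈ Finset.range (n + 1), e k) := by
  intro n
  induction n with
  | zero =>
    intro e he
    show (1 : ℝ) = C ^ 0 * (∏ j ∈ Finset.range 1, e j) * (∑ k ∈ Finset.range 1, e k)
    simp
    rcases he 0 with h0 | h0 <;> rw [h0] <;> ring
  | succ n ih =>
    intro e he
    have hst : Sf (n + 1) (fun j => e j * C)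
        = (∏ j ∈ Finset.range (n + 1), e (j + 1) * C)
          + e 0 * C * Sf n (fun i => e (i + 1) * C) := rfl
    rw [hst, ih (fun i => e (i + 1)) (fun j => he (j + 1))]
    rw [Finset.prod_mul_distrib, Finset.prod_const,
      Finset.prod_range_succ' e (n + 1), Finset.sum_range_succ' e (n + 1)]
    simp only [Finset.card_range]
    rcases he 0 with h0 | h0 <;> rw [h0] <;> ring

lemma sign_sum_bounds (N : ℕ) (hodd : Odd N) (e : ℕ → ℝ)
    (he : ∀ j, e j = 1 ∨ e j = -1) :
    1 ≤ |∑ k ∈ Finset.range N, e k| ∧ |∑ k ∈ Finset.range N, e k| ≤ N := by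
  classical
  set z : ℕ → ℤ := fun j => if e j = 1 then 1 else -1 with hz
  have hez : ∀ j, e j = (z j : ℝ) := by
    intro j
    rcases he j with h | h <;> rw [h] <;> norm_num [hz, h]
  have hsum : (∑ k ∈ Finset.range N, e k) = ((∑ k ∈ Finset.range N, z k : ℤ) : ℝ) := by
    push_cast
    exact Finset.sum_congr rfl fun k _ => hez k
  have hmod : (∑ k ∈ Finset.range N, z k) % 2 = 1 := by
    rw [Finset.sum_int_mod]
    have : ∀ k, z k % 2 = 1 := by
      intro k
      by_cases h : e k = 1 <;> simp [hz, h] <;> norm_num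
    simp only [this, Finset.sum_const, Finset.card_range, smul_eq_mul, mul_one]
    obtain ⟨m, hm⟩ := hodd
    subst hm
    simp only [nsmul_eq_mul, mul_one]
    push_cast
    omega
  have hne : (∑ k ∈ Finset.range N, z k) ≠ 0 := by
    intro h
    rw [h] at hmod
    norm_num at hmod
  have habs1 : (1 : ℤ) ≤ |∑ k ∈ Finset.range N, z k| := Int.one_le_abs hne
  have habs2 : |∑ k ∈ Finset.range N, z k| ≤ N := by
    calc |∑ k ∈ Finset.range N, z k| ≤ ∑ k ∈ Finset.range N, |z k| :=
          Finset.abs_sum_le_sum_abs _ _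
      _ ≤ N := by
          have : ∀ k, |z k| = 1 := by
            intro k
            by_cases h : e k = 1 <;> simp [hz, h]
          simp [this]
  constructor
  · rw [hsum, ← Int.cast_abs]
    exact_mod_cast habs1
  · rw [hsum, ← Int.cast_abs]
    exact_mod_cast habs2

def fsucc (N : ℕ) (hN : 0 < N) (j : Fin N) : Fin N := ⟨((j : ℕ) + 1) % N, Nat.mod_lt _ hN⟩
def fpred (N : ℕ) (hN : 0 < N) (k : Fin N) : Fin N :=
  ⟨((k : ℕ) + (N - 1)) % N, Nat.mod_lt _ hN⟩

lemma fsucc_fpred (N : ℕ) (hN : 0 < N) (k : Fin N) : fsucc N hN (fpred N hN k) = k := by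
  apply Fin.ext
  show (((k : ℕ) + (N - 1)) % N + 1) % N = k
  rw [Nat.mod_add_mod, show (k : ℕ) + (N - 1) + 1 = (k : ℕ) + N by omega,
    Nat.add_mod_right]
  exact Nat.mod_eq_of_lt k.isLt

lemma fpred_fsucc (N : ℕ) (hN : 0 < N) (j : Fin N) : fpred N hN (fsucc N hN j) = j := by
  apply Fin.ext
  show (((j : ℕ) + 1) % N + (N - 1)) % N = j
  rw [Nat.mod_add_mod, show (j : ℕ) + 1 + (N - 1) = (j : ℕ) + N by omega,
    Nat.add_mod_right]
  exact Nat.mod_eq_of_lt j.isLt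

lemma stationary_sin (N : ℕ) (hN : 0 < N) (hN2 : 2 ≤ N) (φ θ : Fin N → ℝ)
    (hstat : IsStationaryPt N hN φ θ) (k : Fin N) (hk : (k : ℕ) < N - 1) :
    Real.sin (sVar N hN φ θ (fpred N hN k)) = Real.sin (sVar N hN φ θ k) := by
  have hd : ∀ i : Fin N, HasDerivAt (fun t => Function.update θ k t i)
      (if i = k then 1 else 0) (θ k) := by
    intro i
    have : (fun t => Function.update θ k t i) = fun t => if i = k then t else θ i := by
      funext t
      rw [Function.update_apply]
    rw [this]
    by_cases h : i = k
    · simp only [h, if_pos rfl]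
      exact hasDerivAt_id _
    · simp only [if_neg h]
      exact hasDerivAt_const _ _
  have hterm : ∀ j : Fin N,
      HasDerivAt (fun t => 1 - Real.cos (sVar N hN φ (Function.update θ k t) j))
        ((if fsucc N hN j = k then Real.sin (sVar N hN φ θ j) else 0)
          - (if j = k then Real.sin (sVar N hN φ θ j) else 0)) (θ k) := by
    intro j
    have h1 : HasDerivAt (fun t => sVar N hN φ (Function.update θ k t) j)
        ((if fsucc N hN j = k then 1 else 0) - (if j = k then 1 else 0)) (θ k) := by
      have := ((hasDerivAt_const (θ k) (φ j)).add (hd (fsucc N hN j))).sub (hd j)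
      simp only [zero_add] at this
      exact this
    have h2 := (h1.cos).const_sub 1
    have hupd : Function.update θ k (θ k) = θ := Function.update_eq_self k θ
    rw [hupd] at h2
    exact h2.congr_deriv (by split_ifs <;> ring)
  have htotal : HasDerivAt (fun t => Fxy N hN φ (Function.update θ k t))
      (∑ j : Fin N, ((if fsucc N hN j = k then Real.sin (sVar N hN φ θ j) else 0)
          - (if j = k then Real.sin (sVar N hN φ θ j) else 0))) (θ k) :=
    HasDerivAt.fun_sum fun j _ => hterm j
  have hzero := hstat k hk
  rw [htotal.deriv] at hzero
  rw [Finset.sum_sub_distrib] at hzero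
  have hs1 : (∑ j : Fin N, if fsucc N hN j = k then Real.sin (sVar N hN φ θ j) else 0)
      = Real.sin (sVar N hN φ θ (fpred N hN k)) := by
    rw [Finset.sum_eq_single (fpred N hN k)]
    · rw [if_pos (fsucc_fpred N hN k)]
    · intro j _ hj
      rw [if_neg]
      intro h
      apply hj
      rw [← fpred_fsucc N hN j, h]
    · intro h
      exact absurd (Finset.mem_univ _) h
  have hs2 : (∑ j : Fin N, if j = k then Real.sin (sVar N hN φ θ j) else 0)
      = Real.sin (sVar N hN φ θ k) := by
    rw [Finset.sum_eq_single k]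
    · rw [if_pos rfl]
    · intro j _ hj
      exact if_neg hj
    · intro h
      exact absurd (Finset.mem_univ _) h
  rw [hs1, hs2] at hzero
  linarith

lemma sin_all_eq (N : ℕ) (hN : 0 < N) (hN3 : 3 ≤ N) (φ θ : Fin N → ℝ)
    (hstat : IsStationaryPt N hN φ θ) (j : Fin N) :
    Real.sin (sVar N hN φ θ j) = Real.sin (sVar N hN φ θ (lastIdx N hN)) := by
  have key : ∀ m : ℕ, (hm : m ≤ N - 2) →
      Real.sin (sVar N hN φ θ ⟨m, by omega⟩)
        = Real.sin (sVar N hN φ θ (lastIdx N hN)) := by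
    intro m
    induction m with
    | zero =>
      intro _
      have h0 := stationary_sin N hN (by omega) φ θ hstat ⟨0, by omega⟩ (by simp; omega)
      have hp : fpred N hN ⟨0, by omega⟩ = lastIdx N hN := by
        apply Fin.ext
        show (0 + (N - 1)) % N = N - 1
        rw [Nat.zero_add]
        exact Nat.mod_eq_of_lt (by omega)
      rw [hp] at h0
      exact h0.symm
    | succ m ih =>
      intro hm
      have h0 := stationary_sin N hN (by omega) φ θ hstat ⟨m + 1, by omega⟩
        (by simp; omega)
      have hp : fpred N hN ⟨m + 1, by omega⟩ = ⟨m, by omega⟩ := by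
        apply Fin.ext
        show (m + 1 + (N - 1)) % N = m
        rw [show m + 1 + (N - 1) = m + N by omega, Nat.add_mod_right]
        exact Nat.mod_eq_of_lt (by omega)
      rw [hp] at h0
      rw [← h0]
      exact ih (by omega)
  by_cases hj : (j : ℕ) = N - 1
  · have : j = lastIdx N hN := Fin.ext hj
    rw [this]
  · have hj2 : (j : ℕ) ≤ N - 2 := by
      have := j.isLt
      omega
    have := key (j : ℕ) hj2
    have hjj : (⟨(j : ℕ), by omega⟩ : Fin N) = j := Fin.ext rfl
    rwa [hjj] at this

lemma cos_pm (N : ℕ) (hN : 0 < N) (hN3 : 3 ≤ N) (φ θ : Fin N → ℝ)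
    (hstat : IsStationaryPt N hN φ θ) (j : Fin N) :
    Real.cos (sVar N hN φ θ j) = Real.cos (sVar N hN φ θ (lastIdx N hN)) ∨
      Real.cos (sVar N hN φ θ j) = -Real.cos (sVar N hN φ θ (lastIdx N hN)) := by
  have hs := sin_all_eq N hN hN3 φ θ hstat j
  have h1 := Real.sin_sq_add_cos_sq (sVar N hN φ θ j)
  have h2 := Real.sin_sq_add_cos_sq (sVar N hN φ θ (lastIdx N hN))
  have hsq : Real.cos (sVar N hN φ θ j) * Real.cos (sVar N hN φ θ j)
      = Real.cos (sVar N hN φ θ (lastIdx N hN)) * Real.cos (sVar N hN φ θ (lastIdx N hN)) := by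
    rw [hs] at h1
    nlinarith [h1, h2]
  exact mul_self_eq_mul_self_iff.mp hsq


lemma hessC_eq_triM (N : ℕ) (hN : 0 < N) (c : Fin N → ℝ) :
    hessC N hN c = triM (fun i => c ⟨(i + (N - 1)) % N, Nat.mod_lt _ hN⟩) (N - 1) := by
  ext i j
  have hb : (⟨((i : ℕ) + 1 + (N - 1)) % N, Nat.mod_lt _ hN⟩ : Fin N)
      = ⟨(i : ℕ), lt_of_lt_of_le i.isLt (Nat.sub_le N 1)⟩ := by
    apply Fin.ext
    show ((i : ℕ) + 1 + (N - 1)) % N = (i : ℕ)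
    rw [show (i : ℕ) + 1 + (N - 1) = (i : ℕ) + N by omega, Nat.add_mod_right]
    exact Nat.mod_eq_of_lt (lt_of_lt_of_le i.isLt (Nat.sub_le N 1))
  simp only [hessC, triM, Matrix.of_apply, Fin.ext_iff]
  rw [hb]
  split_ifs <;> simp <;> try omega
  all_goals
    congr 1
    apply Fin.ext
    show (i : ℕ) = ((j : ℕ) + (N - 1)) % N
    rw [show (j : ℕ) + (N - 1) = (i : ℕ) + N by omega, Nat.add_mod_right]
    exact (Nat.mod_eq_of_lt (lt_of_lt_of_le i.isLt (Nat.sub_le N 1))).symm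


/-- at any stationary point of `F_φ` (odd `N`), the Hessian
determinant satisfies `|cos s_N|^{N-1} ≤ |det 𝓗| ≤ N |cos s_N|^{N-1}`;
in particular, if `cos s_N ≠ 0` the stationary point is nondegenerate. -/
theorem stmt9 (N : ℕ) (hN : 3 ≤ N) (hodd : Odd N) (φ θ : Fin N → ℝ)
    (hlast : θ (lastIdx N (by omega)) = 0)
    (hstat : IsStationaryPt N (by omega) φ θ) :
    |Real.cos (sVar N (by omega) φ θ (lastIdx N (by omega)))| ^ (N - 1) ≤
        |(hessAt N (by omega) φ θ).det| ∧
    |(hessAt N (by omega) φ θ).det| ≤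
        (N : ℝ) * |Real.cos (sVar N (by omega) φ θ (lastIdx N (by omega)))| ^ (N - 1) ∧
    (Real.cos (sVar N (by omega) φ θ (lastIdx N (by omega))) ≠ 0 →
      (hessAt N (by omega) φ θ).det ≠ 0) := by
  have hN0 : 0 < N := by omega
  set c : Fin N → ℝ := fun k => Real.cos (sVar N hN0 φ θ k) with hc
  set C : ℝ := Real.cos (sVar N hN0 φ θ (lastIdx N hN0)) with hC
  set b : ℕ → ℝ := fun i => c ⟨(i + (N - 1)) % N, Nat.mod_lt _ hN0⟩ with hb
  set e : ℕ → ℝ := fun i => if b i = C then 1 else -1 with he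
  have hee : ∀ j, e j = 1 ∨ e j = -1 := by
    intro j
    by_cases h : b j = C <;> simp [he, h]
  have hbe : b = fun j => e j * C := by
    funext i
    by_cases h : b i = C
    · simp [he, h]
    · have := cos_pm N hN0 hN φ θ hstat ⟨(i + (N - 1)) % N, Nat.mod_lt _ hN0⟩
      rcases this with h1 | h1
      · exact absurd h1 h
      · simp only [he, if_neg h]
        rw [show b i = Real.cos (sVar N hN0 φ θ ⟨(i + (N - 1)) % N, Nat.mod_lt _ hN0⟩)
          from rfl, h1]
        ring
  have hdet : (hessAt N (by omega : 0 < N) φ θ).det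
      = C ^ (N - 1) * (∏ j ∈ Finset.range N, e j) * (∑ k ∈ Finset.range N, e k) := by
    have h1 : hessAt N (by omega : 0 < N) φ θ = hessC N hN0 c := rfl
    rw [h1, hessC_eq_triM N hN0 c, ← hb, det_triM, hbe,
      Sf_sign C (N - 1) e hee, show N - 1 + 1 = N by omega]
  have habsprod : |∏ j ∈ Finset.range N, e j| = 1 := by
    rw [Finset.abs_prod]
    rw [Finset.prod_congr rfl (fun j _ => show |e j| = 1 by
      rcases hee j with h | h <;> rw [h] <;> norm_num)]
    simp
  have hsum := sign_sum_bounds N hodd e hee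
  have habs : |(hessAt N (by omega : 0 < N) φ θ).det|
      = |C| ^ (N - 1) * |∑ k ∈ Finset.range N, e k| := by
    rw [hdet, abs_mul, abs_mul, abs_pow, habsprod, mul_one]
  refine ⟨?_, ?_, ?_⟩
  · rw [habs]
    calc |C| ^ (N - 1) = |C| ^ (N - 1) * 1 := by ring
      _ ≤ |C| ^ (N - 1) * |∑ k ∈ Finset.range N, e k| := by
          apply mul_le_mul_of_nonneg_left hsum.1 (by positivity)
  · rw [habs]
    calc |C| ^ (N - 1) * |∑ k ∈ Finset.range N, e k|
        ≤ |C| ^ (N - 1) * N := by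
          apply mul_le_mul_of_nonneg_left hsum.2 (by positivity)
      _ = (N : ℝ) * |C| ^ (N - 1) := by ring
  · intro hCne
    have h1 : 0 < |C| ^ (N - 1) := by positivity
    have h2 : 0 < |(hessAt N (by omega : 0 < N) φ θ).det| := by
      rw [habs]
      have := hsum.1
      nlinarith
    exact abs_pos.mp h2
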